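/- Let p be a projection, e an effect, and α a real number with 0 ≤ α ≤ 1 and pep = α·p. Then the infimum of e and p⊥ = 1 − p exists in the set of effects. More precisely: if α = 0, then e ≤ 1 − p, so e itself is the infimum of e and 1 − p among effects; and if α > 0, then g := e − α⁻¹ e p e is an effect with g ≤ e and g ≤ 1 − p, and every effect f with f ≤ e and f ≤ 1 − p satisfies f ≤ g. -/

import Mathlib

section Aux
variable {A : Type*} [CStarAlgebra A] [PartialOrder A] [StarOrderedRing A]

/-- A self-adjoint idempotent is ≤ 1. -/
lemma aux_proj_le_one {q : A} (hq : IsSelfAdjoint q) (hq2 : q * q = q) : 0 ≤ 1 - q := by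
  have h : (1 - q : A) = star (1 - q) * (1 - q) := by
    rw [star_sub, star_one, hq.star_eq]
    have : (1 - q) * (1 - q) = 1 - q - q + q * q := by noncomm_ring
    rw [this, hq2]; abel
  rw [h]; exact star_mul_self_nonneg _

/-- If `p` is self-adjoint, `0 ≤ f` and `p f p = 0` then `f p = 0` and `p f = 0`. -/
lemma aux_zero {p f : A} (hp : IsSelfAdjoint p) (hf : 0 ≤ f)
    (h : p * f * p = 0) : f * p = 0 ∧ p * f = 0 := by
  set s := CFC.sqrt f with hs
  have hs0 : (0 : A) ≤ s := CFC.sqrt_nonneg (a := f)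
  have hssa : IsSelfAdjoint s := .of_nonneg hs0
  have hss : s * s = f := by rw [← sq, CFC.sq_sqrt f hf]
  have key : star (s * p) * (s * p) = 0 := by
    rw [star_mul, hssa.star_eq, hp.star_eq]
    calc p * s * (s * p) = p * (s * s) * p := by noncomm_ring
    _ = 0 := by rw [hss, h]
  have hsp : s * p = 0 := by rwa [CStarRing.star_mul_self_eq_zero_iff] at key
  have h1 : f * p = 0 := by rw [← hss, mul_assoc, hsp, mul_zero]
  refine ⟨h1, ?_⟩
  have h2 := congrArg star h1
  rwa [star_mul, hp.star_eq, (IsSelfAdjoint.of_nonneg hf).star_eq, star_zero] at h2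

/-- Key positivity lemma: if `0 ≤ d`, `p` is a projection and `p d p = α • p` with
`α > 0`, then `0 ≤ d - α⁻¹ • (d p d)`. -/
lemma aux_key {p d : A} (hp : IsSelfAdjoint p) (hp2 : p * p = p) (hd : 0 ≤ d)
    {α : ℝ} (hα : 0 < α) (hpdp : p * d * p = α • p) :
    0 ≤ d - α⁻¹ • (d * p * d) := by
  set s := CFC.sqrt d with hs
  have hs0 : (0 : A) ≤ s := CFC.sqrt_nonneg (a := d)
  have hssa : IsSelfAdjoint s := .of_nonneg hs0
  have hss : s * s = d := by rw [← sq, CFC.sq_sqrt d hd]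
  set t := s * p * s with ht
  have htsa : IsSelfAdjoint t := by
    rw [ht, IsSelfAdjoint, star_mul, star_mul, hssa.star_eq, hp.star_eq, mul_assoc]
  have htt : t * t = α • t := by
    have h1 : t * t = s * (p * d * p) * s := by
      rw [ht, ← hss]; noncomm_ring
    rw [h1, hpdp]
    simp only [mul_smul_comm, smul_mul_assoc, ht]
  set q := α⁻¹ • t with hq
  have hqsa : IsSelfAdjoint q := by rw [hq, IsSelfAdjoint, star_smul, htsa.star_eq, star_trivial]
  have hq2 : q * q = q := by
    rw [hq, smul_mul_smul_comm, htt, smul_smul]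
    congr 1
    field_simp
  have h1q : (0 : A) ≤ 1 - q := aux_proj_le_one hqsa hq2
  have hpos : (0 : A) ≤ star s * (1 - q) * s := star_left_conjugate_nonneg h1q s
  have heq : star s * (1 - q) * s = d - α⁻¹ • (d * p * d) := by
    rw [hssa.star_eq, hq, ht]
    have h2 : s * (1 - α⁻¹ • (s * p * s)) * s
        = s * s - α⁻¹ • (s * s * p * (s * s)) := by
      simp only [mul_sub, sub_mul, mul_one, mul_smul_comm, smul_mul_assoc]
      noncomm_ring
    rw [h2, hss]
  rwa [heq] at hpos

end Aux

/-- In a unital C*-algebra, let `p` be a projection, `e` an effect, and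
`α` a real number with `0 ≤ α ≤ 1` and `pep = α • p`.  Then the infimum of `e` and
`p⊥ = 1 − p` exists in the set of effects.  More precisely: if `α = 0` then
`e ≤ 1 − p` (so `e` itself is the infimum); and if `α > 0` then
`g := e − α⁻¹ • (epe)` is an effect with `g ≤ e` and `g ≤ 1 − p`, and every effect `f`
with `f ≤ e` and `f ≤ 1 − p` satisfies `f ≤ g`. -/
theorem stmt19 {A : Type*} [CStarAlgebra A] [PartialOrder A] [StarOrderedRing A]
    (p e : A) (hp : IsSelfAdjoint p) (hp2 : p ^ 2 = p)
    (he0 : 0 ≤ e) (he1 : e ≤ 1)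
    (α : ℝ) (hα0 : 0 ≤ α) (hα1 : α ≤ 1) (hpep : p * e * p = α • p) :
    (α = 0 → e ≤ 1 - p) ∧
    (0 < α →
      0 ≤ e - α⁻¹ • (e * p * e) ∧ e - α⁻¹ • (e * p * e) ≤ 1 ∧
      e - α⁻¹ • (e * p * e) ≤ e ∧ e - α⁻¹ • (e * p * e) ≤ 1 - p ∧
      ∀ f : A, 0 ≤ f → f ≤ 1 → f ≤ e → f ≤ 1 - p → f ≤ e - α⁻¹ • (e * p * e)) := by
  have hp2' : p * p = p := by rw [← sq]; exact hp2
  constructor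
  · -- α = 0 case
    intro hα
    subst hα
    rw [zero_smul] at hpep
    obtain ⟨hep, hpe⟩ := aux_zero hp he0 hpep
    have h1e : (0 : A) ≤ 1 - e := sub_nonneg.2 he1
    have hpos : (0 : A) ≤ star (1 - p) * (1 - e) * (1 - p) := star_left_conjugate_nonneg h1e _
    have heq : star (1 - p) * (1 - e) * (1 - p) = 1 - p - e := by
      rw [star_sub, star_one, hp.star_eq]
      have : (1 - p) * (1 - e) * (1 - p)
          = 1 - p - e - p + (p * p) + (p * e) + (e * p) - p * e * p := by noncomm_ring
      rw [this, hp2', hpe, hep, zero_mul]; abel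
    rw [heq] at hpos
    have : e + 0 ≤ e + (1 - p - e) := by simpa only [add_zero, zero_add, add_comm] using add_le_add_left hpos e
    simpa using this
  · intro hα
    have hg0 : 0 ≤ e - α⁻¹ • (e * p * e) := aux_key hp hp2' he0 hα hpep
    have hge : e - α⁻¹ • (e * p * e) ≤ e := by
      have hepe : (0 : A) ≤ e * p * e := by
        have heq2 : e * p * e = star (p * e) * (p * e) := by
          calc e * p * e = e * (p * p) * e := by rw [hp2']
          _ = star (p * e) * (p * e) := by
              rw [star_mul, hp.star_eq, (IsSelfAdjoint.of_nonneg he0).star_eq]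
              noncomm_ring
        rw [heq2]; exact star_mul_self_nonneg _
      have : (0:A) ≤ α⁻¹ • (e * p * e) := smul_nonneg (by positivity) hepe
      simpa using sub_le_sub_left this e -- e - x ≤ e - 0
    have hg1 : e - α⁻¹ • (e * p * e) ≤ 1 := hge.trans he1
    -- p * g = 0 and g * p = 0
    have hpg : p * (e - α⁻¹ • (e * p * e)) = 0 := by
      have h1 : p * (e * p * e) = α • (p * e) := by
        rw [show p * (e * p * e) = (p * e * p) * e by noncomm_ring, hpep, smul_mul_assoc]
      rw [mul_sub, mul_smul_comm, h1, smul_smul, inv_mul_cancel₀ hα.ne', one_smul, sub_self]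
    have hgp : (e - α⁻¹ • (e * p * e)) * p = 0 := by
      have h1 : (e * p * e) * p = α • (e * p) := by
        rw [show (e * p * e) * p = e * (p * e * p) by noncomm_ring, hpep, mul_smul_comm]
      rw [sub_mul, smul_mul_assoc, h1, smul_smul, inv_mul_cancel₀ hα.ne', one_smul, sub_self]
    have hgP : e - α⁻¹ • (e * p * e) ≤ 1 - p := by
      set g := e - α⁻¹ • (e * p * e) with hg
      have h1g : (0:A) ≤ 1 - g := sub_nonneg.2 hg1
      have hpos : (0:A) ≤ star (1 - p) * (1 - g) * (1 - p) := star_left_conjugate_nonneg h1g _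
      have heq : star (1 - p) * (1 - g) * (1 - p) = 1 - p - g := by
        rw [star_sub, star_one, hp.star_eq]
        have : (1 - p) * (1 - g) * (1 - p)
            = 1 - p - g - p + (p * p) + (p * g) + (g * p) - p * g * p := by noncomm_ring
        rw [this, hp2', hpg, hgp, zero_mul]; abel
      rw [heq] at hpos
      have := add_le_add_left hpos g
      simpa using this
    refine ⟨hg0, hg1, hge, hgP, ?_⟩
    intro f hf0 hf1 hfe hfP
    -- p f p = 0 hence f p = p f = 0
    have hpfp : p * f * p = 0 := by
      have hle : p * f * p ≤ p * (1 - p) * p := hp.conjugate_le_conjugate hfP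
      have h0 : p * (1 - p) * p = 0 := by
        rw [mul_sub, mul_one, hp2', sub_self, zero_mul]
      have hge0 : (0:A) ≤ p * f * p := by
        have := star_left_conjugate_nonneg hf0 p
        rwa [hp.star_eq] at this
      exact le_antisymm (h0 ▸ hle) hge0
    obtain ⟨hfp, hpf⟩ := aux_zero hp hf0 hpfp
    set d := e - f with hd
    have hd0 : 0 ≤ d := sub_nonneg.2 hfe
    have hpdp : p * d * p = α • p := by
      rw [hd, mul_sub, sub_mul, hpfp, sub_zero, hpep]
    have hdpd : d * p * d = e * p * e := by
      rw [hd]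
      have : (e - f) * p * (e - f)
          = e * p * e - e * (p * f) - (f * p) * e + f * (p * f) := by noncomm_ring
      rw [this, hpf, hfp, mul_zero, mul_zero, zero_mul]; abel
    have hkey := aux_key hp hp2' hd0 hα hpdp
    rw [hdpd, hd] at hkey
    have : e - f - α⁻¹ • (e * p * e) = (e - α⁻¹ • (e * p * e)) - f := by abel
    rw [this] at hkey
    exact sub_nonneg.1 hkey
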